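/- Let 1 < q < 2, r > 0, R > 0 and assume f ∈ B_{q,r}(R). Then there exists C_q > 0 depending only on q such that for every p ∈ ℕ* and every λ_p > 0 (in particular λ_p = 4ε(√(ln p)+1)), inf_{h ∈ L1(D_p)} ( ‖f − h‖² + λ_p‖h‖_{L1(D_p)} ) ≤ C_q max( R^q λ_p^{2−q} , (R p^{−r})^{2q/(2−q)} λ_p^{4(1−q)/(2−q)} ). -/

import Mathlib

open MeasureTheory Real

noncomputable section

/-- Membership in the linear span of the truncated dictionary `{φ 0, …, φ (p-1)}`
(representing `{φ_1, …, φ_p}`). -/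
def L1set {H : Type*} [AddCommGroup H] [Module ℝ H] (φ : ℕ → H) (p : ℕ) : Set H :=
  {h | ∃ θ : Fin p → ℝ, h = ∑ j, θ j • φ (j : ℕ)}

/-- The ℓ¹ norm with respect to the truncated dictionary. -/
def l1norm {H : Type*} [AddCommGroup H] [Module ℝ H] (φ : ℕ → H) (p : ℕ) (h : H) : ℝ :=
  sInf {s : ℝ | ∃ θ : Fin p → ℝ, h = ∑ j, θ j • φ (j : ℕ) ∧ s = ∑ j, |θ j|}

/-- Membership in the space `L_{1,r}`. -/
def memL1r {H : Type*} [NormedAddCommGroup H] [InnerProductSpace ℝ H]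
    (φ : ℕ → H) (r : ℝ) (g : H) : Prop :=
  ∃ C : ℝ, 0 < C ∧ ∀ p : ℕ, 1 ≤ p →
    ∃ gp ∈ L1set φ p, l1norm φ p gp ≤ C ∧ ‖g - gp‖ ≤ C * (p : ℝ) ^ (-r)

/-- The norm of the space `L_{1,r}` (the smallest admissible constant `C`). -/
def l1rnorm {H : Type*} [NormedAddCommGroup H] [InnerProductSpace ℝ H]
    (φ : ℕ → H) (r : ℝ) (g : H) : ℝ :=
  sInf {C : ℝ | 0 < C ∧ ∀ p : ℕ, 1 ≤ p →
    ∃ gp ∈ L1set φ p, l1norm φ p gp ≤ C ∧ ‖g - gp‖ ≤ C * (p : ℝ) ^ (-r)}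

/-- Membership in the interpolation space `B_{q,r}(R)`. -/
def memBqr {H : Type*} [NormedAddCommGroup H] [InnerProductSpace ℝ H]
    (φ : ℕ → H) (q r R : ℝ) (g : H) : Prop :=
  ∀ δ : ℝ, 0 < δ →
    (⨅ h : {h : H // memL1r φ r h}, (‖g - (h : H)‖ + δ * l1rnorm φ r (h : H))) ≤
      R * δ ^ (2 * (1 / q - 1 / 2))

lemma l1norm_nonneg' {H : Type*} [AddCommGroup H] [Module ℝ H] (φ : ℕ → H) (p : ℕ) (h : H) :
    0 ≤ l1norm φ p h := by
  apply Real.sInf_nonneg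
  rintro s ⟨θ, -, rfl⟩
  exact Finset.sum_nonneg fun j _ => abs_nonneg _

lemma zero_mem_L1set' {H : Type*} [AddCommGroup H] [Module ℝ H] (φ : ℕ → H) (p : ℕ) :
    (0 : H) ∈ L1set φ p := ⟨0, by simp⟩

lemma l1norm_zero' {H : Type*} [AddCommGroup H] [Module ℝ H] (φ : ℕ → H) (p : ℕ) :
    l1norm φ p (0 : H) ≤ 0 := by
  apply csInf_le
  · refine ⟨0, ?_⟩
    rintro s ⟨θ, -, rfl⟩
    exact Finset.sum_nonneg fun j _ => abs_nonneg _
  · exact ⟨0, by simp, by simp⟩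

lemma memL1r_zero' {H : Type*} [NormedAddCommGroup H] [InnerProductSpace ℝ H]
    (φ : ℕ → H) (r : ℝ) : memL1r φ r (0 : H) := by
  refine ⟨1, one_pos, fun p hp => ⟨0, zero_mem_L1set' φ p,
    le_trans (l1norm_zero' φ p) zero_le_one, ?_⟩⟩
  have hp0 : (0:ℝ) < (p:ℝ) := by exact_mod_cast hp
  simp [Real.rpow_nonneg hp0.le]

lemma l1rnorm_nonneg' {H : Type*} [NormedAddCommGroup H] [InnerProductSpace ℝ H]
    (φ : ℕ → H) (r : ℝ) (h : H) : 0 ≤ l1rnorm φ r h :=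
  Real.sInf_nonneg fun C hC => hC.1.le

lemma exists_good_C {H : Type*} [NormedAddCommGroup H] [InnerProductSpace ℝ H]
    (φ : ℕ → H) (r : ℝ) (h : H) (hmem : memL1r φ r h) (ε : ℝ) (hε : 0 < ε) :
    ∃ C : ℝ, C < l1rnorm φ r h + ε ∧ (0 < C ∧ ∀ p : ℕ, 1 ≤ p →
      ∃ gp ∈ L1set φ p, l1norm φ p gp ≤ C ∧ ‖h - gp‖ ≤ C * (p : ℝ) ^ (-r)) := by
  obtain ⟨C₀, hC₀⟩ := hmem
  obtain ⟨C, hCmem, hClt⟩ := exists_lt_of_csInf_lt (⟨C₀, hC₀⟩ : Set.Nonempty _)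
    (lt_add_of_pos_right (l1rnorm φ r h) hε)
  exact ⟨C, hClt, hCmem⟩

set_option maxHeartbeats 1000000 in
/-- Key step: from the interpolation bound at level `δ`, a quantitative bound for the
Lasso criterion with slack `e`. -/
lemma key_lemma {H : Type} [NormedAddCommGroup H] [InnerProductSpace ℝ H]
    (φ : ℕ → H) (f : H) (r : ℝ) (p : ℕ) (hp : 1 ≤ p) (lam δ X : ℝ)
    (hδ : 0 < δ) (hlam : 0 < lam)
    (hfX : (⨅ h : {h : H // memL1r φ r h}, (‖f - (h : H)‖ + δ * l1rnorm φ r (h : H))) ≤ X)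
    (e : ℝ) (he : 0 < e) :
    (⨅ h : L1set φ p, (‖f - (h : H)‖ ^ 2 + lam * l1norm φ p (h : H))) ≤
      2*(X + δ*e/2)^2 + 2*((X/δ + e) * (p:ℝ)^(-r))^2 + lam*(X/δ + e) := by
  have hp0 : (0:ℝ) < (p:ℝ) := by exact_mod_cast hp
  have hQ : (0:ℝ) < (p:ℝ)^(-r) := Real.rpow_pos_of_pos hp0 _
  have h1 : (⨅ h : {h : H // memL1r φ r h},
      (‖f - (h : H)‖ + δ * l1rnorm φ r (h : H))) < X + δ*e/2 :=
    lt_of_le_of_lt hfX (by nlinarith)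
  haveI : Nonempty {h : H // memL1r φ r h} := ⟨⟨0, memL1r_zero' φ r⟩⟩
  obtain ⟨⟨h, hhmem⟩, hh⟩ := exists_lt_of_ciInf_lt h1
  simp only at hh
  have hL0 : 0 ≤ l1rnorm φ r h := l1rnorm_nonneg' φ r h
  obtain ⟨C, hClt, hCmem⟩ := exists_good_C φ r h hhmem (e/2) (by linarith)
  obtain ⟨gp, hgpmem, hgp1, hgp2⟩ := hCmem.2 p hp
  have hfh : ‖f - h‖ ≤ X + δ*e/2 := by
    have := mul_nonneg hδ.le hL0
    linarith
  have hδL : δ * l1rnorm φ r h ≤ X + δ*e/2 := by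
    have := norm_nonneg (f - h)
    linarith
  have hCδ : δ * C ≤ X + δ * e := by
    have h2 : δ * C < δ * (l1rnorm φ r h + e/2) := by
      exact mul_lt_mul_of_pos_left hClt hδ
    have h3 : δ * (l1rnorm φ r h + e/2) = δ * l1rnorm φ r h + δ * (e/2) := by ring
    linarith
  have hCb : C ≤ X/δ + e := by
    rw [← sub_nonneg]
    have : X/δ + e - C = (X + δ * e - δ * C)/δ := by field_simp
    rw [this]
    apply div_nonneg _ hδ.le
    linarith
  have hIbdd : BddBelow (Set.range fun h : L1set φ p =>
      ‖f - (h : H)‖ ^ 2 + lam * l1norm φ p (h : H)) := by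
    refine ⟨0, ?_⟩
    rintro x ⟨h', rfl⟩
    exact add_nonneg (by positivity) (mul_nonneg hlam.le (l1norm_nonneg' φ p _))
  have hIle : (⨅ h : L1set φ p, (‖f - (h : H)‖ ^ 2 + lam * l1norm φ p (h : H))) ≤
      ‖f - gp‖ ^ 2 + lam * l1norm φ p gp := ciInf_le hIbdd ⟨gp, hgpmem⟩
  have htri : ‖f - gp‖ ≤ ‖f - h‖ + ‖h - gp‖ := by
    have := norm_add_le (f - h) (h - gp)
    simpa [sub_add_sub_cancel] using this
  have hhg : ‖h - gp‖ ≤ (X/δ + e) * (p:ℝ)^(-r) :=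
    le_trans hgp2 (mul_le_mul_of_nonneg_right hCb hQ.le)
  have hnorm : ‖f - gp‖ ≤ (X + δ*e/2) + (X/δ + e) * (p:ℝ)^(-r) := by linarith
  have hsq : ‖f - gp‖ ^ 2 ≤ 2*(X + δ*e/2)^2 + 2*((X/δ + e) * (p:ℝ)^(-r))^2 := by
    have h0 : ‖f - gp‖ ^ 2 ≤ ((X + δ*e/2) + (X/δ + e) * (p:ℝ)^(-r)) ^ 2 := by
      apply pow_le_pow_left₀ (norm_nonneg _) hnorm
    have h1 : ((X + δ*e/2) + (X/δ + e) * (p:ℝ)^(-r)) ^ 2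
        ≤ 2*(X + δ*e/2)^2 + 2*((X/δ + e) * (p:ℝ)^(-r))^2 := by
      nlinarith [sq_nonneg ((X + δ*e/2) - (X/δ + e) * (p:ℝ)^(-r))]
    linarith
  have hl1 : lam * l1norm φ p gp ≤ lam * (X/δ + e) :=
    mul_le_mul_of_nonneg_left (le_trans hgp1 hCb) hlam.le
  linarith

set_option maxHeartbeats 1000000 in
/-- Pure real-number algebra: with the optimal choice of `δ`, the clean bound is at most
`5 * max A B`. -/
lemma algebra_lemma (q r R lam : ℝ) (p : ℕ) (hq1 : 1 < q) (hq2 : q < 2)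
    (hR : 0 < R) (hlam : 0 < lam) (hp : 1 ≤ p) :
    2 * (R * ((lam / R) ^ (q / 2) : ℝ) ^ (2 * (1 / q - 1 / 2))) ^ 2
      + 2 * ((R * ((lam / R) ^ (q / 2) : ℝ) ^ (2 * (1 / q - 1 / 2))) / ((lam / R) ^ (q / 2))
          * (p:ℝ)^(-r)) ^ 2
      + lam * ((R * ((lam / R) ^ (q / 2) : ℝ) ^ (2 * (1 / q - 1 / 2))) / ((lam / R) ^ (q / 2)))
    ≤ 5 * max (R ^ q * lam ^ (2 - q))
        ((R * (p : ℝ) ^ (-r)) ^ (2 * q / (2 - q)) * lam ^ (4 * (1 - q) / (2 - q))) := by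
  have hq0 : (0:ℝ) < q := by linarith
  have h2q : (0:ℝ) < 2 - q := by linarith
  have hp0 : (0:ℝ) < (p:ℝ) := by exact_mod_cast hp
  set Q : ℝ := (p:ℝ) ^ (-r) with hQdef
  have hQ : 0 < Q := Real.rpow_pos_of_pos hp0 _
  set A : ℝ := R ^ q * lam ^ (2 - q) with hAdef
  set B : ℝ := (R * Q) ^ (2 * q / (2 - q)) * lam ^ (4 * (1 - q) / (2 - q)) with hBdef
  have hApos : 0 < A := mul_pos (Real.rpow_pos_of_pos hR _) (Real.rpow_pos_of_pos hlam _)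
  have hBpos : 0 < B :=
    mul_pos (Real.rpow_pos_of_pos (mul_pos hR hQ) _) (Real.rpow_pos_of_pos hlam _)
  set δ : ℝ := (lam / R) ^ (q / 2) with hδdef
  have hδ : 0 < δ := Real.rpow_pos_of_pos (div_pos hlam hR) _
  set X : ℝ := R * δ ^ (2 * (1 / q - 1 / 2)) with hXdef
  have hX : 0 < X := mul_pos hR (Real.rpow_pos_of_pos hδ _)
  have hY : 0 < X / δ := div_pos hX hδ
  have hlδ : Real.log δ = (q/2) * (Real.log lam - Real.log R) := by
    rw [hδdef, Real.log_rpow (div_pos hlam hR), Real.log_div hlam.ne' hR.ne']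
  have hlX : Real.log X = Real.log R + (2 * (1/q - 1/2)) * Real.log δ := by
    rw [hXdef, Real.log_mul hR.ne' (Real.rpow_pos_of_pos hδ _).ne', Real.log_rpow hδ]
  have hlA : Real.log A = q * Real.log R + (2 - q) * Real.log lam := by
    rw [hAdef, Real.log_mul (Real.rpow_pos_of_pos hR _).ne' (Real.rpow_pos_of_pos hlam _).ne',
      Real.log_rpow hR, Real.log_rpow hlam]
  have hlB : Real.log B = (2 * q / (2 - q)) * (Real.log R + Real.log Q)
      + (4 * (1 - q) / (2 - q)) * Real.log lam := by
    rw [hBdef, Real.log_mul (Real.rpow_pos_of_pos (mul_pos hR hQ) _).ne'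
      (Real.rpow_pos_of_pos hlam _).ne', Real.log_rpow (mul_pos hR hQ),
      Real.log_rpow hlam, Real.log_mul hR.ne' hQ.ne']
  have hXA : X ^ 2 = A := by
    have h1 : Real.log (X ^ 2) = Real.log A := by
      rw [Real.log_pow, hlX, hlA, hlδ]
      push_cast
      field_simp
      ring
    calc X ^ 2 = Real.exp (Real.log (X ^ 2)) := (Real.exp_log (by positivity)).symm
      _ = Real.exp (Real.log A) := by rw [h1]
      _ = A := Real.exp_log hApos
  have hlamY : lam * (X / δ) = A := by
    have h1 : Real.log (lam * (X / δ)) = Real.log A := by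
      rw [Real.log_mul hlam.ne' hY.ne', Real.log_div hX.ne' hδ.ne', hlX, hlA, hlδ]
      field_simp
      ring
    calc lam * (X / δ) = Real.exp (Real.log (lam * (X / δ))) :=
          (Real.exp_log (by positivity)).symm
      _ = Real.exp (Real.log A) := by rw [h1]
      _ = A := Real.exp_log hApos
  have hT : (X / δ) ^ 2 * Q ^ 2 = A ^ ((2*q-2)/q) * B ^ ((2-q)/q) := by
    have h1 : Real.log ((X / δ) ^ 2 * Q ^ 2)
        = Real.log (A ^ ((2*q-2)/q) * B ^ ((2-q)/q)) := by
      rw [Real.log_mul (by positivity) (by positivity),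
        Real.log_mul (Real.rpow_pos_of_pos hApos _).ne' (Real.rpow_pos_of_pos hBpos _).ne',
        Real.log_rpow hApos, Real.log_rpow hBpos, Real.log_pow, Real.log_pow,
        Real.log_div hX.ne' hδ.ne', hlX, hlA, hlB, hlδ]
      push_cast
      field_simp
      ring
    calc (X / δ) ^ 2 * Q ^ 2 = Real.exp (Real.log ((X / δ) ^ 2 * Q ^ 2)) :=
          (Real.exp_log (by positivity)).symm
      _ = Real.exp (Real.log (A ^ ((2*q-2)/q) * B ^ ((2-q)/q))) := by rw [h1]
      _ = A ^ ((2*q-2)/q) * B ^ ((2-q)/q) := Real.exp_log (by positivity)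
  set M : ℝ := max A B with hMdef
  have hMpos : 0 < M := lt_max_of_lt_left hApos
  have hTM : (X / δ) ^ 2 * Q ^ 2 ≤ M := by
    rw [hT]
    have hx : (0:ℝ) ≤ (2*q-2)/q := div_nonneg (by linarith) hq0.le
    have hy : (0:ℝ) ≤ (2-q)/q := div_nonneg (by linarith) hq0.le
    calc A ^ ((2*q-2)/q) * B ^ ((2-q)/q)
        ≤ M ^ ((2*q-2)/q) * M ^ ((2-q)/q) := by
          apply mul_le_mul (Real.rpow_le_rpow hApos.le (le_max_left _ _) hx)
            (Real.rpow_le_rpow hBpos.le (le_max_right _ _) hy)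
            (Real.rpow_nonneg hBpos.le _) (Real.rpow_nonneg hMpos.le _)
      _ = M ^ ((2*q-2)/q + (2-q)/q) := (Real.rpow_add hMpos _ _).symm
      _ = M ^ (1:ℝ) := by rw [show (2*q-2)/q + (2-q)/q = 1 by field_simp; ring]
      _ = M := Real.rpow_one M
  have hAM : A ≤ M := le_max_left _ _
  have hexp : (X / δ * Q) ^ 2 = (X / δ) ^ 2 * Q ^ 2 := by ring
  calc 2 * X ^ 2 + 2 * (X / δ * Q) ^ 2 + lam * (X / δ)
      = 2 * A + 2 * ((X / δ) ^ 2 * Q ^ 2) + A := by rw [hXA, hlamY, hexp]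
    _ ≤ 2 * M + 2 * M + M := by linarith
    _ = 5 * M := by ring

set_option maxHeartbeats 1000000 in
/-- Rate of convergence of the deterministic Lasso over the truncated dictionaries
for targets in `B_{q,r}(R)`. -/
theorem statement_11 :
    ∀ q : ℝ, 1 < q → q < 2 →
    ∃ C : ℝ, 0 < C ∧
      ∀ (r R : ℝ), 0 < r → 0 < R →
      ∀ (H : Type) [NormedAddCommGroup H] [InnerProductSpace ℝ H]
        (φ : ℕ → H) (f : H), memBqr φ q r R f →
      ∀ (p : ℕ), 1 ≤ p →
      ∀ (lam : ℝ), 0 < lam →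
        (⨅ h : L1set φ p, (‖f - (h : H)‖ ^ 2 + lam * l1norm φ p (h : H))) ≤
          C * max (R ^ q * lam ^ (2 - q))
            ((R * (p : ℝ) ^ (-r)) ^ (2 * q / (2 - q)) * lam ^ (4 * (1 - q) / (2 - q))) := by
  intro q hq1 hq2
  refine ⟨5, by norm_num, ?_⟩
  intro r R hr hR H _ _ φ f hf p hp lam hlam
  have hδ : (0:ℝ) < (lam / R) ^ (q / 2) := Real.rpow_pos_of_pos (div_pos hlam hR) _
  set δ : ℝ := (lam / R) ^ (q / 2) with hδdef
  set X : ℝ := R * δ ^ (2 * (1 / q - 1 / 2)) with hXdef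
  have hfX : (⨅ h : {h : H // memL1r φ r h},
      (‖f - (h : H)‖ + δ * l1rnorm φ r (h : H))) ≤ X := hf δ hδ
  set g : ℝ → ℝ := fun e => 2*(X + δ*e/2)^2 + 2*((X/δ + e) * (p:ℝ)^(-r))^2 + lam*(X/δ + e)
    with hgdef
  have key : ∀ e : ℝ, 0 < e →
      (⨅ h : L1set φ p, (‖f - (h : H)‖ ^ 2 + lam * l1norm φ p (h : H))) ≤ g e :=
    fun e he => key_lemma φ f r p hp lam δ X hδ hlam hfX e he
  have hg0 : Filter.Tendsto g (nhdsWithin 0 (Set.Ioi 0)) (nhds (g 0)) :=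
    Filter.Tendsto.mono_left (Continuous.tendsto (by fun_prop) 0) nhdsWithin_le_nhds
  have hI0 : (⨅ h : L1set φ p, (‖f - (h : H)‖ ^ 2 + lam * l1norm φ p (h : H))) ≤ g 0 := by
    refine ge_of_tendsto hg0 ?_
    filter_upwards [self_mem_nhdsWithin] with e he
    exact key e he
  have hg0eq : g 0 = 2 * X ^ 2 + 2 * (X / δ * (p:ℝ)^(-r)) ^ 2 + lam * (X / δ) := by
    rw [hgdef]; dsimp only; ring
  calc (⨅ h : L1set φ p, (‖f - (h : H)‖ ^ 2 + lam * l1norm φ p (h : H))) ≤ g 0 := hI0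
    _ = 2 * X ^ 2 + 2 * (X / δ * (p:ℝ)^(-r)) ^ 2 + lam * (X / δ) := hg0eq
    _ ≤ 5 * max (R ^ q * lam ^ (2 - q))
        ((R * (p : ℝ) ^ (-r)) ^ (2 * q / (2 - q)) * lam ^ (4 * (1 - q) / (2 - q))) := by
        rw [hXdef, hδdef]
        exact algebra_lemma q r R lam p hq1 hq2 hR hlam hp
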